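/- For every t ∈ ℝ, the third Frenet curvature of the osculating indicatrix x̃ (as a curve in ℝ⁶) satisfies κ̃₃(t) = λ / (a₁a₂α₁α₂·√(α₁² + α₂²)); in particular κ̃₃ is constant. -/

import Mathlib

open Real intervalIntegral

/-- The curve `x(t) = (a₁ cos(α₁ t), a₁ sin(α₁ t), a₂ cos(α₂ t), a₂ sin(α₂ t))` in `ℝ⁴`. -/
noncomputable def curveX (a₁ a₂ α₁ α₂ : ℝ) : ℝ → EuclideanSpace ℝ (Fin 4) :=
  fun t => (WithLp.equiv 2 (Fin 4 → ℝ)).symm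
    ![a₁ * Real.cos (α₁ * t), a₁ * Real.sin (α₁ * t),
      a₂ * Real.cos (α₂ * t), a₂ * Real.sin (α₂ * t)]

/-- `D_j(t)`: the determinant of the `j × j` Gram matrix whose `(a,b)` entry is the inner
product of the `a`-th and `b`-th derivatives of `y` at `t` (`1 ≤ a, b ≤ j`); `D₀ = 1`. -/
noncomputable def gramDet {n : ℕ} (y : ℝ → EuclideanSpace ℝ (Fin n)) (j : ℕ) (t : ℝ) : ℝ :=
  Matrix.det (Matrix.of fun a b : Fin j =>
    (inner ℝ (iteratedDeriv (a.val + 1) y t) (iteratedDeriv (b.val + 1) y t) : ℝ))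

/-- The `j`-th Frenet curvature `κ_j(t) = √(D_{j+1} D_{j-1}) / (D_j ‖y′(t)‖)` (for `j ≥ 1`). -/
noncomputable def frenetCurvature {n : ℕ} (y : ℝ → EuclideanSpace ℝ (Fin n)) (j : ℕ) (t : ℝ) :
    ℝ :=
  Real.sqrt (gramDet y (j + 1) t * gramDet y (j - 1) t) / (gramDet y j t * ‖deriv y t‖)

/-- The Plücker coordinates `w(t)` of the exterior product of `x′(t)` and `x″(t)`. -/
noncomputable def oscW (x : ℝ → EuclideanSpace ℝ (Fin 4)) (t : ℝ) : EuclideanSpace ℝ (Fin 6) :=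
  (WithLp.equiv 2 (Fin 6 → ℝ)).symm
    ![deriv x t 0 * deriv (deriv x) t 1 - deriv x t 1 * deriv (deriv x) t 0,
      deriv x t 0 * deriv (deriv x) t 2 - deriv x t 2 * deriv (deriv x) t 0,
      deriv x t 0 * deriv (deriv x) t 3 - deriv x t 3 * deriv (deriv x) t 0,
      deriv x t 1 * deriv (deriv x) t 2 - deriv x t 2 * deriv (deriv x) t 1,
      deriv x t 1 * deriv (deriv x) t 3 - deriv x t 3 * deriv (deriv x) t 1,
      deriv x t 2 * deriv (deriv x) t 3 - deriv x t 3 * deriv (deriv x) t 2]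

/-- The osculating indicatrix `x̃(t) = w(t) / ‖w(t)‖`. -/
noncomputable def oscInd (x : ℝ → EuclideanSpace ℝ (Fin 4)) (t : ℝ) :
    EuclideanSpace ℝ (Fin 6) :=
  ‖oscW x t‖⁻¹ • oscW x t

lemma hasDerivAt_euclidean {n : ℕ} {f : ℝ → EuclideanSpace ℝ (Fin n)}
    {f' : EuclideanSpace ℝ (Fin n)} {t : ℝ}
    (h : ∀ i, HasDerivAt (fun s => f s i) (f' i) t) : HasDerivAt f f' t := by
  have H : HasDerivAt (fun s => (fun i => f s i)) (fun i => f' i) t := hasDerivAt_pi.2 h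
  exact ((PiLp.continuousLinearEquiv 2 ℝ (fun _ : Fin n => ℝ)).symm.toContinuousLinearMap.hasFDerivAt.comp_hasDerivAt t H :)

lemma hasDerivAt_sin_mul (ω t : ℝ) :
    HasDerivAt (fun s => Real.sin (ω * s)) (ω * Real.cos (ω * t)) t := by
  have h := (Real.hasDerivAt_sin (ω * t)).comp t ((hasDerivAt_id t).const_mul ω)
  rw [show ω * Real.cos (ω * t) = Real.cos (ω*t) * (ω * 1) by ring]
  exact h

lemma hasDerivAt_cos_mul (ω t : ℝ) :
    HasDerivAt (fun s => Real.cos (ω * s)) (-(ω * Real.sin (ω * t))) t := by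
  have h := (Real.hasDerivAt_cos (ω * t)).comp t ((hasDerivAt_id t).const_mul ω)
  rw [show -(ω * Real.sin (ω * t)) = -Real.sin (ω*t) * (ω * 1) by ring]
  exact h

noncomputable def vA (P Q β γ t : ℝ) : EuclideanSpace ℝ (Fin 6) :=
  (WithLp.equiv 2 (Fin 6 → ℝ)).symm
    ![0, Q * Real.sin (γ*t) + P * Real.sin (β*t),
      P * Real.cos (β*t) - Q * Real.cos (γ*t),
      -(P * Real.cos (β*t)) - Q * Real.cos (γ*t),
      -(Q * Real.sin (γ*t)) + P * Real.sin (β*t), 0]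

noncomputable def vB (P Q β γ t : ℝ) : EuclideanSpace ℝ (Fin 6) :=
  (WithLp.equiv 2 (Fin 6 → ℝ)).symm
    ![0, Q * Real.cos (γ*t) + P * Real.cos (β*t),
      -(P * Real.sin (β*t)) + Q * Real.sin (γ*t),
      P * Real.sin (β*t) + Q * Real.sin (γ*t),
      -(Q * Real.cos (γ*t)) + P * Real.cos (β*t), 0]

noncomputable def vC (c d : ℝ) : EuclideanSpace ℝ (Fin 6) :=
  (WithLp.equiv 2 (Fin 6 → ℝ)).symm ![c, 0, 0, 0, 0, d]

lemma vA_app0 (P Q β γ t : ℝ) : vA P Q β γ t 0 = 0 := rfl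
lemma vA_app1 (P Q β γ t : ℝ) : vA P Q β γ t 1 = Q * Real.sin (γ*t) + P * Real.sin (β*t) := rfl
lemma vA_app2 (P Q β γ t : ℝ) : vA P Q β γ t 2 = P * Real.cos (β*t) - Q * Real.cos (γ*t) := rfl
lemma vA_app3 (P Q β γ t : ℝ) : vA P Q β γ t 3 = -(P * Real.cos (β*t)) - Q * Real.cos (γ*t) := rfl
lemma vA_app4 (P Q β γ t : ℝ) : vA P Q β γ t 4 = -(Q * Real.sin (γ*t)) + P * Real.sin (β*t) := rfl
lemma vA_app5 (P Q β γ t : ℝ) : vA P Q β γ t 5 = 0 := rfl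
lemma vB_app0 (P Q β γ t : ℝ) : vB P Q β γ t 0 = 0 := rfl
lemma vB_app1 (P Q β γ t : ℝ) : vB P Q β γ t 1 = Q * Real.cos (γ*t) + P * Real.cos (β*t) := rfl
lemma vB_app2 (P Q β γ t : ℝ) : vB P Q β γ t 2 = -(P * Real.sin (β*t)) + Q * Real.sin (γ*t) := rfl
lemma vB_app3 (P Q β γ t : ℝ) : vB P Q β γ t 3 = P * Real.sin (β*t) + Q * Real.sin (γ*t) := rfl
lemma vB_app4 (P Q β γ t : ℝ) : vB P Q β γ t 4 = -(Q * Real.cos (γ*t)) + P * Real.cos (β*t) := rfl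
lemma vB_app5 (P Q β γ t : ℝ) : vB P Q β γ t 5 = 0 := rfl
lemma vC_app0 (c d : ℝ) : vC c d 0 = c := rfl
lemma vC_app1 (c d : ℝ) : vC c d 1 = 0 := rfl
lemma vC_app2 (c d : ℝ) : vC c d 2 = 0 := rfl
lemma vC_app3 (c d : ℝ) : vC c d 3 = 0 := rfl
lemma vC_app4 (c d : ℝ) : vC c d 4 = 0 := rfl
lemma vC_app5 (c d : ℝ) : vC c d 5 = d := rfl

lemma vA_hasDeriv (P Q β γ t : ℝ) :
    HasDerivAt (fun s => vA P Q β γ s) (vB (P*β) (Q*γ) β γ t) t := by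
  apply hasDerivAt_euclidean
  intro i
  fin_cases i
  · exact hasDerivAt_const t 0
  · convert ((hasDerivAt_sin_mul γ t).const_mul Q).add ((hasDerivAt_sin_mul β t).const_mul P) using 1
    show (Q*γ) * Real.cos (γ*t) + (P*β) * Real.cos (β*t) = _
    ring
    all_goals rfl
  · convert ((hasDerivAt_cos_mul β t).const_mul P).sub ((hasDerivAt_cos_mul γ t).const_mul Q) using 1
    show -((P*β) * Real.sin (β*t)) + (Q*γ) * Real.sin (γ*t) = _
    ring
    all_goals rfl
  · convert (((hasDerivAt_cos_mul β t).const_mul P).neg).sub ((hasDerivAt_cos_mul γ t).const_mul Q) using 1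
    show (P*β) * Real.sin (β*t) + (Q*γ) * Real.sin (γ*t) = _
    ring
    all_goals rfl
  · convert (((hasDerivAt_sin_mul γ t).const_mul Q).neg).add ((hasDerivAt_sin_mul β t).const_mul P) using 1
    show -((Q*γ) * Real.cos (γ*t)) + (P*β) * Real.cos (β*t) = _
    ring
    all_goals rfl
  · exact hasDerivAt_const t 0

lemma vB_hasDeriv (P Q β γ t : ℝ) :
    HasDerivAt (fun s => vB P Q β γ s) (vA (-(P*β)) (-(Q*γ)) β γ t) t := by
  apply hasDerivAt_euclidean
  intro i
  fin_cases i
  · exact hasDerivAt_const t 0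
  · convert ((hasDerivAt_cos_mul γ t).const_mul Q).add ((hasDerivAt_cos_mul β t).const_mul P) using 1
    show (-(Q*γ)) * Real.sin (γ*t) + (-(P*β)) * Real.sin (β*t) = _
    ring
    all_goals rfl
  · convert (((hasDerivAt_sin_mul β t).const_mul P).neg).add ((hasDerivAt_sin_mul γ t).const_mul Q) using 1
    show (-(P*β)) * Real.cos (β*t) - (-(Q*γ)) * Real.cos (γ*t) = _
    ring
    all_goals rfl
  · convert ((hasDerivAt_sin_mul β t).const_mul P).add ((hasDerivAt_sin_mul γ t).const_mul Q) using 1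
    show -((-(P*β)) * Real.cos (β*t)) - (-(Q*γ)) * Real.cos (γ*t) = _
    ring
    all_goals rfl
  · convert (((hasDerivAt_cos_mul γ t).const_mul Q).neg).add ((hasDerivAt_cos_mul β t).const_mul P) using 1
    show -((-(Q*γ)) * Real.sin (γ*t)) + (-(P*β)) * Real.sin (β*t) = _
    ring
    all_goals rfl
  · exact hasDerivAt_const t 0

lemma inner_vA_vA (P Q P' Q' β γ t : ℝ) :
    (inner ℝ (vA P Q β γ t) (vA P' Q' β γ t) : ℝ) = 2*(P*P') + 2*(Q*Q') := by
  simp only [PiLp.inner_apply, RCLike.inner_apply, conj_trivial, Fin.sum_univ_six,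
    vA_app0, vA_app1, vA_app2, vA_app3, vA_app4, vA_app5]
  linear_combination (2*P*P') * Real.sin_sq_add_cos_sq (β*t) + (2*Q*Q') * Real.sin_sq_add_cos_sq (γ*t)

lemma inner_vB_vB (P Q P' Q' β γ t : ℝ) :
    (inner ℝ (vB P Q β γ t) (vB P' Q' β γ t) : ℝ) = 2*(P*P') + 2*(Q*Q') := by
  simp only [PiLp.inner_apply, RCLike.inner_apply, conj_trivial, Fin.sum_univ_six,
    vB_app0, vB_app1, vB_app2, vB_app3, vB_app4, vB_app5]
  linear_combination (2*P*P') * Real.sin_sq_add_cos_sq (β*t) + (2*Q*Q') * Real.sin_sq_add_cos_sq (γ*t)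

lemma inner_vA_vB (P Q P' Q' β γ t : ℝ) :
    (inner ℝ (vA P Q β γ t) (vB P' Q' β γ t) : ℝ) = 0 := by
  simp only [PiLp.inner_apply, RCLike.inner_apply, conj_trivial, Fin.sum_univ_six,
    vA_app0, vA_app1, vA_app2, vA_app3, vA_app4, vA_app5,
    vB_app0, vB_app1, vB_app2, vB_app3, vB_app4, vB_app5]
  ring

lemma inner_vB_vA (P Q P' Q' β γ t : ℝ) :
    (inner ℝ (vB P Q β γ t) (vA P' Q' β γ t) : ℝ) = 0 := by
  rw [real_inner_comm]; exact inner_vA_vB _ _ _ _ _ _ _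

lemma inner_vC_vC (c d : ℝ) : (inner ℝ (vC c d) (vC c d) : ℝ) = c^2 + d^2 := by
  simp only [PiLp.inner_apply, RCLike.inner_apply, conj_trivial, Fin.sum_univ_six,
    vC_app0, vC_app1, vC_app2, vC_app3, vC_app4, vC_app5]
  ring

lemma inner_vC_vA (c d P Q β γ t : ℝ) : (inner ℝ (vC c d) (vA P Q β γ t) : ℝ) = 0 := by
  simp only [PiLp.inner_apply, RCLike.inner_apply, conj_trivial, Fin.sum_univ_six,
    vC_app0, vC_app1, vC_app2, vC_app3, vC_app4, vC_app5,
    vA_app0, vA_app1, vA_app2, vA_app3, vA_app4, vA_app5]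
  ring

lemma inner_vA_vC (c d P Q β γ t : ℝ) : (inner ℝ (vA P Q β γ t) (vC c d) : ℝ) = 0 := by
  rw [real_inner_comm]; exact inner_vC_vA _ _ _ _ _ _ _

lemma cons_val_five' (a b c d e f : ℝ) : ![a,b,c,d,e,f] 5 = f := rfl

lemma det_fin_four' (M : Matrix (Fin 4) (Fin 4) ℝ) : M.det =
    M 0 0 * M 1 1 * M 2 2 * M 3 3 - M 0 0 * M 1 1 * M 2 3 * M 3 2 - M 0 0 * M 1 2 * M 2 1 * M 3 3 + M 0 0 * M 1 2 * M 2 3 * M 3 1 + M 0 0 * M 1 3 * M 2 1 * M 3 2 - M 0 0 * M 1 3 * M 2 2 * M 3 1 - M 0 1 * M 1 0 * M 2 2 * M 3 3 + M 0 1 * M 1 0 * M 2 3 * M 3 2 + M 0 1 * M 1 2 * M 2 0 * M 3 3 - M 0 1 * M 1 2 * M 2 3 * M 3 0 - M 0 1 * M 1 3 * M 2 0 * M 3 2 + M 0 1 * M 1 3 * M 2 2 * M 3 0 + M 0 2 * M 1 0 * M 2 1 * M 3 3 - M 0 2 * M 1 0 * M 2 3 * M 3 1 - M 0 2 * M 1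 1 * M 2 0 * M 3 3 + M 0 2 * M 1 1 * M 2 3 * M 3 0 + M 0 2 * M 1 3 * M 2 0 * M 3 1 - M 0 2 * M 1 3 * M 2 1 * M 3 0 - M 0 3 * M 1 0 * M 2 1 * M 3 2 + M 0 3 * M 1 0 * M 2 2 * M 3 1 + M 0 3 * M 1 1 * M 2 0 * M 3 2 - M 0 3 * M 1 1 * M 2 2 * M 3 0 - M 0 3 * M 1 2 * M 2 0 * M 3 1 + M 0 3 * M 1 2 * M 2 1 * M 3 0 := by
  rw [Matrix.det_succ_row_zero]
  simp [Fin.sum_univ_succ, Matrix.det_fin_three, Matrix.submatrix_apply, Fin.zero_succAbove,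
    show Fin.succAbove (2:Fin 4) (2:Fin 3) = 3 from rfl, show Fin.succAbove (3:Fin 4) (2:Fin 3) = 2 from rfl,
    show Fin.succAbove (1:Fin 4) (2:Fin 3) = 3 from rfl]
  ring

lemma kappa_alg (lam m2 m4 G Hh r : ℝ) (hlam : 0 < lam)
    (hm2 : 0 < m2) (hm4 : 0 < m4) (hG : 0 < G) (hH : 0 < Hh) (hr : 0 < r)
    (hkey : Hh * r^2 = m4 * G) :
    Real.sqrt (lam⁻¹^8*(G*Hh) * (lam⁻¹^4*(m2*m4))) / (lam⁻¹^6*(m4*G) * (lam⁻¹ * Real.sqrt m2))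
      = lam / r := by
  apply (sq_eq_sq₀ (by positivity) (by positivity)).mp
  rw [div_pow, div_pow, Real.sq_sqrt (by positivity)]
  simp only [mul_pow]
  rw [Real.sq_sqrt hm2.le]
  rw [div_eq_div_iff (by positivity) (by positivity)]
  field_simp
  linear_combination hkey


theorem stmt16 (a₁ a₂ α₁ α₂ : ℝ) (ha₁ : 0 < a₁) (ha₂ : 0 < a₂)
    (hα₁ : 0 < α₁) (hα₂ : 0 < α₂) (hne : α₁ ≠ α₂) (lam : ℝ)
    (hlam : lam = Real.sqrt (a₁ ^ 2 * α₁ ^ 2 + a₂ ^ 2 * α₂ ^ 2) * Real.sqrt (a₁ ^ 2 * α₁ ^ 4 + a₂ ^ 2 * α₂ ^ 4)) :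
    ∀ t : ℝ, frenetCurvature (oscInd (curveX a₁ a₂ α₁ α₂)) 3 t
      = lam / (a₁ * a₂ * α₁ * α₂ * Real.sqrt (α₁ ^ 2 + α₂ ^ 2)) := by
  intro t
  set β := α₁ - α₂ with hβ
  set γ := α₁ + α₂ with hγ
  set P := a₁*a₂*α₁*α₂*γ/2 with hP
  set Q := -(a₁*a₂*α₁*α₂*β/2) with hQ
  set Δ := β^2 - γ^2 with hΔ
  set c1 := a₁^2*α₁^3 with hc1
  set c2 := a₂^2*α₂^3 with hc2
  have hβne : β ≠ 0 := sub_ne_zero.2 hne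
  have hγpos : 0 < γ := by rw [hγ]; positivity
  have hPpos : 0 < P := by rw [hP]; positivity
  have hQne : Q ≠ 0 := by
    rw [hQ]
    exact neg_ne_zero.2 (div_ne_zero
      (mul_ne_zero (by positivity) hβne) two_ne_zero)
  have hΔne : Δ ≠ 0 := by
    rw [hΔ, hβ, hγ]
    have h : (α₁-α₂)^2 - (α₁+α₂)^2 < 0 := by nlinarith [mul_pos hα₁ hα₂]
    exact ne_of_lt h
  have hlampos : 0 < lam := by rw [hlam]; positivity
  have hlam2 : lam^2 = (a₁^2*α₁^2+a₂^2*α₂^2)*(a₁^2*α₁^4+a₂^2*α₂^4) := by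
    rw [hlam, mul_pow, Real.sq_sqrt (by positivity), Real.sq_sqrt (by positivity)]
  -- first derivative of curveX
  have hd1 : deriv (curveX a₁ a₂ α₁ α₂) = fun s => (WithLp.equiv 2 (Fin 4 → ℝ)).symm
      ![-(a₁*α₁*Real.sin (α₁*s)), a₁*α₁*Real.cos (α₁*s),
        -(a₂*α₂*Real.sin (α₂*s)), a₂*α₂*Real.cos (α₂*s)] := by
    funext s
    refine HasDerivAt.deriv ?_
    apply hasDerivAt_euclidean
    intro i
    fin_cases i
    · convert (hasDerivAt_cos_mul α₁ s).const_mul a₁ using 1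
      show -(a₁*α₁*Real.sin (α₁*s)) = _
      ring
      all_goals rfl
    · convert (hasDerivAt_sin_mul α₁ s).const_mul a₁ using 1
      show a₁*α₁*Real.cos (α₁*s) = _
      ring
      all_goals rfl
    · convert (hasDerivAt_cos_mul α₂ s).const_mul a₂ using 1
      show -(a₂*α₂*Real.sin (α₂*s)) = _
      ring
      all_goals rfl
    · convert (hasDerivAt_sin_mul α₂ s).const_mul a₂ using 1
      show a₂*α₂*Real.cos (α₂*s) = _
      ring
      all_goals rfl
  -- second derivative
  have hd2 : deriv (deriv (curveX a₁ a₂ α₁ α₂)) = fun s => (WithLp.equiv 2 (Fin 4 → ℝ)).symm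
      ![-(a₁*α₁^2*Real.cos (α₁*s)), -(a₁*α₁^2*Real.sin (α₁*s)),
        -(a₂*α₂^2*Real.cos (α₂*s)), -(a₂*α₂^2*Real.sin (α₂*s))] := by
    rw [hd1]
    funext s
    refine HasDerivAt.deriv ?_
    apply hasDerivAt_euclidean
    intro i
    fin_cases i
    · convert ((hasDerivAt_sin_mul α₁ s).const_mul (a₁*α₁)).neg using 1
      show -(a₁*α₁^2*Real.cos (α₁*s)) = _
      ring
      all_goals rfl
    · convert (hasDerivAt_cos_mul α₁ s).const_mul (a₁*α₁) using 1
      show -(a₁*α₁^2*Real.sin (α₁*s)) = _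
      ring
      all_goals rfl
    · convert ((hasDerivAt_sin_mul α₂ s).const_mul (a₂*α₂)).neg using 1
      show -(a₂*α₂^2*Real.cos (α₂*s)) = _
      ring
      all_goals rfl
    · convert (hasDerivAt_cos_mul α₂ s).const_mul (a₂*α₂) using 1
      show -(a₂*α₂^2*Real.sin (α₂*s)) = _
      ring
      all_goals rfl
  -- oscW in closed form
  have hW : oscW (curveX a₁ a₂ α₁ α₂) = fun s => vC c1 c2 + vA P Q β γ s := by
    funext s
    simp only [oscW]
    rw [hd2, hd1]
    ext i
    fin_cases i
    · show (-(a₁*α₁*Real.sin (α₁*s))) * (-(a₁*α₁^2*Real.sin (α₁*s)))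
          - (a₁*α₁*Real.cos (α₁*s)) * (-(a₁*α₁^2*Real.cos (α₁*s))) = c1 + 0
      rw [hc1]
      linear_combination (a₁^2*α₁^3) * Real.sin_sq_add_cos_sq (α₁*s)
    · show (-(a₁*α₁*Real.sin (α₁*s))) * (-(a₂*α₂^2*Real.cos (α₂*s)))
          - (-(a₂*α₂*Real.sin (α₂*s))) * (-(a₁*α₁^2*Real.cos (α₁*s)))
          = 0 + (Q * Real.sin (γ*s) + P * Real.sin (β*s))
      rw [hP, hQ, hβ, hγ, show (α₁+α₂)*s = α₁*s + α₂*s from by ring,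
        show (α₁-α₂)*s = α₁*s - α₂*s from by ring, Real.sin_add, Real.sin_sub]
      ring
    · show (-(a₁*α₁*Real.sin (α₁*s))) * (-(a₂*α₂^2*Real.sin (α₂*s)))
          - (a₂*α₂*Real.cos (α₂*s)) * (-(a₁*α₁^2*Real.cos (α₁*s)))
          = 0 + (P * Real.cos (β*s) - Q * Real.cos (γ*s))
      rw [hP, hQ, hβ, hγ, show (α₁+α₂)*s = α₁*s + α₂*s from by ring,
        show (α₁-α₂)*s = α₁*s - α₂*s from by ring, Real.cos_add, Real.cos_sub]
      ring
    · show (a₁*α₁*Real.cos (α₁*s)) * (-(a₂*α₂^2*Real.cos (α₂*s)))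
          - (-(a₂*α₂*Real.sin (α₂*s))) * (-(a₁*α₁^2*Real.sin (α₁*s)))
          = 0 + (-(P * Real.cos (β*s)) - Q * Real.cos (γ*s))
      rw [hP, hQ, hβ, hγ, show (α₁+α₂)*s = α₁*s + α₂*s from by ring,
        show (α₁-α₂)*s = α₁*s - α₂*s from by ring, Real.cos_add, Real.cos_sub]
      ring
    · show (a₁*α₁*Real.cos (α₁*s)) * (-(a₂*α₂^2*Real.sin (α₂*s)))
          - (a₂*α₂*Real.cos (α₂*s)) * (-(a₁*α₁^2*Real.sin (α₁*s)))
          = 0 + (-(Q * Real.sin (γ*s)) + P * Real.sin (β*s))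
      rw [hP, hQ, hβ, hγ, show (α₁+α₂)*s = α₁*s + α₂*s from by ring,
        show (α₁-α₂)*s = α₁*s - α₂*s from by ring, Real.sin_add, Real.sin_sub]
      ring
    · show (-(a₂*α₂*Real.sin (α₂*s))) * (-(a₂*α₂^2*Real.sin (α₂*s)))
          - (a₂*α₂*Real.cos (α₂*s)) * (-(a₂*α₂^2*Real.cos (α₂*s))) = c2 + 0
      rw [hc2]
      linear_combination (a₂^2*α₂^3) * Real.sin_sq_add_cos_sq (α₂*s)
  -- constant norm
  have hnorm : ∀ s, ‖oscW (curveX a₁ a₂ α₁ α₂) s‖ = lam := by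
    intro s
    rw [hW]
    have hin : (inner ℝ (vC c1 c2 + vA P Q β γ s) (vC c1 c2 + vA P Q β γ s) : ℝ) = lam^2 := by
      rw [inner_add_left, inner_add_right, inner_add_right, inner_vC_vC, inner_vC_vA,
        inner_vA_vC, inner_vA_vA, hlam2, hc1, hc2, hP, hQ, hβ, hγ]
      ring
    rw [norm_eq_sqrt_real_inner, hin, Real.sqrt_sq hlampos.le]
  set Y := oscInd (curveX a₁ a₂ α₁ α₂) with hYdef
  have hosc : Y = fun s => lam⁻¹ • (vC c1 c2 + vA P Q β γ s) := by
    funext s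
    rw [hYdef]
    show ‖oscW (curveX a₁ a₂ α₁ α₂) s‖⁻¹ • oscW (curveX a₁ a₂ α₁ α₂) s = _
    rw [hnorm s, hW]
  -- derivative chain
  have hYd : deriv Y = fun s => lam⁻¹ • vB (P*β) (Q*γ) β γ s := by
    rw [hosc]
    funext s
    exact (HasDerivAt.const_smul lam⁻¹ ((vA_hasDeriv P Q β γ s).const_add (vC c1 c2))).deriv
  have E1 : iteratedDeriv 1 Y = fun s => lam⁻¹ • vB (P*β) (Q*γ) β γ s := by
    rw [iteratedDeriv_one, hYd]
  have E2 : iteratedDeriv 2 Y = fun s => lam⁻¹ • vA (-(P*β*β)) (-(Q*γ*γ)) β γ s := by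
    rw [iteratedDeriv_succ, E1]
    funext s
    exact (HasDerivAt.const_smul lam⁻¹ (vB_hasDeriv (P*β) (Q*γ) β γ s)).deriv
  have E3 : iteratedDeriv 3 Y = fun s => lam⁻¹ • vB (-(P*β*β)*β) (-(Q*γ*γ)*γ) β γ s := by
    rw [iteratedDeriv_succ, E2]
    funext s
    exact (HasDerivAt.const_smul lam⁻¹ (vA_hasDeriv (-(P*β*β)) (-(Q*γ*γ)) β γ s)).deriv
  have E4 : iteratedDeriv 4 Y = fun s => lam⁻¹ • vA (-(-(P*β*β)*β*β)) (-(-(Q*γ*γ)*γ*γ)) β γ s := by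
    rw [iteratedDeriv_succ, E3]
    funext s
    exact (HasDerivAt.const_smul lam⁻¹ (vB_hasDeriv (-(P*β*β)*β) (-(Q*γ*γ)*γ) β γ s)).deriv
  -- Gram matrix entries
  have G11 : (inner ℝ (iteratedDeriv 1 Y t) (iteratedDeriv 1 Y t) : ℝ)
      = lam⁻¹^2 * (2*P^2*β^2 + 2*Q^2*γ^2) := by
    rw [E1]
    simp only [real_inner_smul_left, real_inner_smul_right, inner_vB_vB]
    ring
  have G22 : (inner ℝ (iteratedDeriv 2 Y t) (iteratedDeriv 2 Y t) : ℝ)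
      = lam⁻¹^2 * (2*P^2*β^4 + 2*Q^2*γ^4) := by
    rw [E2]
    simp only [real_inner_smul_left, real_inner_smul_right, inner_vA_vA]
    ring
  have G33 : (inner ℝ (iteratedDeriv 3 Y t) (iteratedDeriv 3 Y t) : ℝ)
      = lam⁻¹^2 * (2*P^2*β^6 + 2*Q^2*γ^6) := by
    rw [E3]
    simp only [real_inner_smul_left, real_inner_smul_right, inner_vB_vB]
    ring
  have G44 : (inner ℝ (iteratedDeriv 4 Y t) (iteratedDeriv 4 Y t) : ℝ)
      = lam⁻¹^2 * (2*P^2*β^8 + 2*Q^2*γ^8) := by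
    rw [E4]
    simp only [real_inner_smul_left, real_inner_smul_right, inner_vA_vA]
    ring
  have G13 : (inner ℝ (iteratedDeriv 1 Y t) (iteratedDeriv 3 Y t) : ℝ)
      = -(lam⁻¹^2 * (2*P^2*β^4 + 2*Q^2*γ^4)) := by
    rw [E1, E3]
    simp only [real_inner_smul_left, real_inner_smul_right, inner_vB_vB]
    ring
  have G31 : (inner ℝ (iteratedDeriv 3 Y t) (iteratedDeriv 1 Y t) : ℝ)
      = -(lam⁻¹^2 * (2*P^2*β^4 + 2*Q^2*γ^4)) := by
    rw [E1, E3]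
    simp only [real_inner_smul_left, real_inner_smul_right, inner_vB_vB]
    ring
  have G24 : (inner ℝ (iteratedDeriv 2 Y t) (iteratedDeriv 4 Y t) : ℝ)
      = -(lam⁻¹^2 * (2*P^2*β^6 + 2*Q^2*γ^6)) := by
    rw [E2, E4]
    simp only [real_inner_smul_left, real_inner_smul_right, inner_vA_vA]
    ring
  have G42 : (inner ℝ (iteratedDeriv 4 Y t) (iteratedDeriv 2 Y t) : ℝ)
      = -(lam⁻¹^2 * (2*P^2*β^6 + 2*Q^2*γ^6)) := by
    rw [E2, E4]
    simp only [real_inner_smul_left, real_inner_smul_right, inner_vA_vA]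
    ring
  have G12 : (inner ℝ (iteratedDeriv 1 Y t) (iteratedDeriv 2 Y t) : ℝ) = 0 := by
    rw [E1, E2]
    simp only [real_inner_smul_left, real_inner_smul_right, inner_vB_vA]
    ring
  have G21 : (inner ℝ (iteratedDeriv 2 Y t) (iteratedDeriv 1 Y t) : ℝ) = 0 := by
    rw [E1, E2]
    simp only [real_inner_smul_left, real_inner_smul_right, inner_vA_vB]
    ring
  have G14 : (inner ℝ (iteratedDeriv 1 Y t) (iteratedDeriv 4 Y t) : ℝ) = 0 := by
    rw [E1, E4]
    simp only [real_inner_smul_left, real_inner_smul_right, inner_vB_vA]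
    ring
  have G41 : (inner ℝ (iteratedDeriv 4 Y t) (iteratedDeriv 1 Y t) : ℝ) = 0 := by
    rw [E1, E4]
    simp only [real_inner_smul_left, real_inner_smul_right, inner_vA_vB]
    ring
  have G23 : (inner ℝ (iteratedDeriv 2 Y t) (iteratedDeriv 3 Y t) : ℝ) = 0 := by
    rw [E2, E3]
    simp only [real_inner_smul_left, real_inner_smul_right, inner_vA_vB]
    ring
  have G32 : (inner ℝ (iteratedDeriv 3 Y t) (iteratedDeriv 2 Y t) : ℝ) = 0 := by
    rw [E2, E3]
    simp only [real_inner_smul_left, real_inner_smul_right, inner_vB_vA]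
    ring
  have G34 : (inner ℝ (iteratedDeriv 3 Y t) (iteratedDeriv 4 Y t) : ℝ) = 0 := by
    rw [E3, E4]
    simp only [real_inner_smul_left, real_inner_smul_right, inner_vB_vA]
    ring
  have G43 : (inner ℝ (iteratedDeriv 4 Y t) (iteratedDeriv 3 Y t) : ℝ) = 0 := by
    rw [E3, E4]
    simp only [real_inner_smul_left, real_inner_smul_right, inner_vA_vB]
    ring
  -- Gram determinants
  have hD2 : gramDet Y 2 t = lam⁻¹^4 * ((2*P^2*β^2+2*Q^2*γ^2) * (2*P^2*β^4+2*Q^2*γ^4)) := by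
    rw [gramDet, Matrix.det_fin_two]
    simp only [Matrix.of_apply, show ((0:Fin 2)).val = 0 from rfl,
      show ((1:Fin 2)).val = 1 from rfl, show (0:ℕ)+1 = 1 from rfl, show (1:ℕ)+1 = 2 from rfl]
    rw [G11, G22, G12, G21]
    ring
  have hD3 : gramDet Y 3 t = lam⁻¹^6 * ((2*P^2*β^4+2*Q^2*γ^4) * (4*P^2*Q^2*β^2*γ^2*Δ^2)) := by
    rw [gramDet, Matrix.det_fin_three]
    simp only [Matrix.of_apply, show ((0:Fin 3)).val = 0 from rfl,
      show ((1:Fin 3)).val = 1 from rfl, show ((2:Fin 3)).val = 2 from rfl,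
      show (0:ℕ)+1 = 1 from rfl, show (1:ℕ)+1 = 2 from rfl, show (2:ℕ)+1 = 3 from rfl]
    rw [G11, G22, G33, G12, G21, G13, G31, G23, G32, hΔ]
    ring
  have hD4 : gramDet Y 4 t = lam⁻¹^8 * ((4*P^2*Q^2*β^2*γ^2*Δ^2) * (4*P^2*Q^2*β^4*γ^4*Δ^2)) := by
    rw [gramDet, det_fin_four']
    simp only [Matrix.of_apply, show ((0:Fin 4)).val = 0 from rfl,
      show ((1:Fin 4)).val = 1 from rfl, show ((2:Fin 4)).val = 2 from rfl,
      show ((3:Fin 4)).val = 3 from rfl, show (0:ℕ)+1 = 1 from rfl,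
      show (1:ℕ)+1 = 2 from rfl, show (2:ℕ)+1 = 3 from rfl, show (3:ℕ)+1 = 4 from rfl]
    rw [G11, G22, G33, G44, G12, G21, G13, G31, G14, G41, G23, G32, G24, G42, G34, G43, hΔ]
    ring
  have hnrm : ‖deriv Y t‖ = lam⁻¹ * Real.sqrt (2*P^2*β^2+2*Q^2*γ^2) := by
    rw [hYd]
    show ‖lam⁻¹ • vB (P*β) (Q*γ) β γ t‖ = _
    rw [norm_smul, Real.norm_eq_abs, abs_of_pos (inv_pos.2 hlampos),
      norm_eq_sqrt_real_inner (vB (P*β) (Q*γ) β γ t), inner_vB_vB]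
    congr 1
    ring
  -- final computation
  have hfc : frenetCurvature Y 3 t
      = Real.sqrt (gramDet Y 4 t * gramDet Y 2 t) / (gramDet Y 3 t * ‖deriv Y t‖) := by
    rw [frenetCurvature]
  rw [hfc, hD2, hD3, hD4, hnrm]
  have hkey : (4*P^2*Q^2*β^4*γ^4*Δ^2) * (a₁ * a₂ * α₁ * α₂ * Real.sqrt (α₁^2+α₂^2))^2
      = (2*P^2*β^4+2*Q^2*γ^4) * (4*P^2*Q^2*β^2*γ^2*Δ^2) := by
    rw [mul_pow, Real.sq_sqrt (by positivity : (0:ℝ) ≤ α₁^2+α₂^2), hΔ, hP, hQ, hβ, hγ]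
    ring
  exact kappa_alg lam (2*P^2*β^2+2*Q^2*γ^2) (2*P^2*β^4+2*Q^2*γ^4)
    (4*P^2*Q^2*β^2*γ^2*Δ^2) (4*P^2*Q^2*β^4*γ^4*Δ^2)
    (a₁ * a₂ * α₁ * α₂ * Real.sqrt (α₁^2+α₂^2)) hlampos
    (by positivity) (by positivity) (by positivity) (by positivity) (by positivity) hkey
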